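/- If a finite directed graph G is disconnected (its underlying undirected graph has more than one connected component) then N(G) = 0, equivalently Ψ(G) = 0. -/

import Mathlib

open scoped BigOperators

/-- The field of rational functions in variables indexed by `V` over `ℚ`. -/
abbrev K (V : Type) : Type := FractionRing (MvPolynomial V ℚ)

/-- The variable `x_v` seen inside the field of rational functions. -/
noncomputable def xv {V : Type} (v : V) : K V :=
  algebraMap (MvPolynomial V ℚ) (K V) (MvPolynomial.X v)

/-- `ψ_w = 1 / ∏ (x_{w_i} - x_{w_{i+1}})` for a word `w`. -/
noncomputable def psi {V : Type} (w : List V) : K V :=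
  (((w.zip w.tail).map fun p => xv p.1 - xv p.2).prod)⁻¹

/-- The word (list of vertices) associated to an enumeration `σ` of the vertex set `W`. -/
def wordOf {V : Type} (W : Finset V) (σ : Fin W.card ≃ W) : List V :=
  (List.finRange W.card).map fun i => ((σ i : W) : V)

/-- `σ` enumerates `W` in an order compatible with all edges of `E`:
the origin of every edge appears before its end. -/
def IsExt {V : Type} (W : Finset V) (E : Finset (V × V)) (σ : Fin W.card ≃ W) : Prop :=
  ∀ e ∈ E, ∃ i j : Fin W.card, i < j ∧ ((σ i : W) : V) = e.1 ∧ ((σ j : W) : V) = e.2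

instance {V : Type} [DecidableEq V] (W : Finset V) (E : Finset (V × V)) (σ : Fin W.card ≃ W) :
    Decidable (IsExt W E σ) := by unfold IsExt; exact inferInstance

/-- `Ψ(G) = Σ_{w ∈ L(G)} ψ_w`, the sum over linear extensions of the graph with
vertex set `W` and edge set `E`. -/
noncomputable def PsiG {V : Type} [DecidableEq V] (W : Finset V) (E : Finset (V × V)) : K V :=
  ∑ σ : Fin W.card ≃ W, if IsExt W E σ then psi (wordOf W σ) else 0

/-- `N(G) = Ψ(G) ⬝ ∏_{(a,b) ∈ E} (x_a - x_b)`. -/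
noncomputable def NG {V : Type} [DecidableEq V] (W : Finset V) (E : Finset (V × V)) : K V :=
  PsiG W E * ∏ e ∈ E, (xv e.1 - xv e.2)

/-- `φ(G)`, the formal sum of the linear extensions of `G` in the free abelian
group on words. -/
noncomputable def phiG {V : Type} [DecidableEq V] (W : Finset V) (E : Finset (V × V)) :
    List V →₀ ℤ :=
  ∑ σ : Fin W.card ≃ W, if IsExt W E σ then Finsupp.single (wordOf W σ) 1 else 0

/-- The graph has no directed circuit. -/
def Acyclic {V : Type} (E : Finset (V × V)) : Prop :=
  ∀ v : V, ¬ Relation.TransGen (fun a b => (a, b) ∈ E) v v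

/-- The underlying undirected simple graph of the directed graph with edge set `E`. -/
def undirected {V : Type} (E : Finset (V × V)) : SimpleGraph V :=
  SimpleGraph.fromRel fun a b => (a, b) ∈ E

/-- The cyclically-consecutive pairs of a list of vertices. -/
def cyclePairs {V : Type} [DecidableEq V] (vs : List V) : Finset (V × V) :=
  Finset.image (fun i : Fin vs.length => (vs.get i, vs.get (finRotate _ i))) Finset.univ

/-- `vs` is (the vertex list of) a cycle of the graph `E`, whose set of forward
edges (edges traversed in their graph orientation) is `HE`. -/
def IsCycle {V : Type} [DecidableEq V] (E : Finset (V × V)) (vs : List V)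
    (HE : Finset (V × V)) : Prop :=
  2 ≤ vs.length ∧ vs.Nodup ∧ HE ⊆ cyclePairs vs ∧ HE ⊆ E ∧
    ∀ p ∈ cyclePairs vs, p ∉ HE → (p.2, p.1) ∈ E

def shuffles {V : Type} : List V → List V → List (List V)
  | [], v => [v]
  | a :: u, [] => [a :: u]
  | a :: u, b :: v =>
      ((shuffles u (b :: v)).map (a :: ·)) ++ ((shuffles (a :: u) v).map (b :: ·))
  termination_by u v => u.length + v.length

theorem shuffles_perm {V : Type} : ∀ (u v : List V), ∀ w ∈ shuffles u v, w.Perm (u ++ v) := by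
  intro u v
  induction u, v using shuffles.induct with
  | case1 v => simp [shuffles]
  | case2 a u => simp [shuffles]
  | case3 a u b v ih1 ih2 =>
    intro w hw
    rw [shuffles] at hw
    rcases List.mem_append.1 hw with h | h <;> rcases List.mem_map.1 h with ⟨w', hw', rfl⟩
    · exact ((ih1 w' hw').cons a)
    · exact ((ih2 w' hw').cons b).trans (List.perm_middle.symm)

theorem cons_mem_shuffles_left {V : Type} {u v w : List V} (a : V)
    (h : w ∈ shuffles u v) : a :: w ∈ shuffles (a :: u) v := by
  cases v with
  | nil =>
    simp [shuffles] at h ⊢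
    cases u <;> simpa [shuffles] using h
  | cons b v =>
    rw [shuffles]
    exact List.mem_append_left _ (List.mem_map.2 ⟨w, h, rfl⟩)

theorem cons_mem_shuffles_right {V : Type} {u v w : List V} (b : V)
    (h : w ∈ shuffles u v) : b :: w ∈ shuffles u (b :: v) := by
  cases u with
  | nil => simp [shuffles] at h ⊢; simp [h]
  | cons a u =>
    rw [shuffles]
    exact List.mem_append_right _ (List.mem_map.2 ⟨w, h, rfl⟩)

theorem filter_of_mem_shuffles {V : Type} (p : V → Bool) :
    ∀ (u v : List V), ∀ w ∈ shuffles u v, (∀ x ∈ u, p x = true) → (∀ x ∈ v, p x = false) →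
      w.filter p = u ∧ w.filter (fun x => !p x) = v := by
  intro u v
  induction u, v using shuffles.induct with
  | case1 v =>
    intro w hw hu hv
    simp [shuffles] at hw
    subst hw
    constructor
    · rw [List.filter_eq_nil_iff]; intro x hx; simp [hv x hx]
    · rw [List.filter_eq_self]; intro x hx; simp [hv x hx]
  | case2 a u =>
    intro w hw hu hv
    simp [shuffles] at hw
    subst hw
    constructor
    · rw [List.filter_eq_self]; intro x hx; simp [hu x hx]
    · rw [List.filter_eq_nil_iff]; intro x hx; simp [hu x hx]
  | case3 a u b v ih1 ih2 =>
    intro w hw hu hv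
    rw [shuffles] at hw
    rcases List.mem_append.1 hw with h | h <;> rcases List.mem_map.1 h with ⟨w', hw', rfl⟩
    · have ha : p a = true := hu a (by simp)
      have := ih1 w' hw' (fun x hx => hu x (by simp [hx])) hv
      simp [List.filter_cons, ha, this.1, this.2]
    · have hb : p b = false := hv b (by simp)
      have := ih2 w' hw' hu (fun x hx => hv x (by simp [hx]))
      simp [List.filter_cons, hb, this.1, this.2]

theorem mem_shuffles_filter {V : Type} (p : V → Bool) :
    ∀ w : List V, w ∈ shuffles (w.filter p) (w.filter (fun x => !p x)) := by
  intro w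
  induction w with
  | nil => simp [shuffles]
  | cons c w ih =>
    by_cases hc : p c = true
    · rw [List.filter_cons_of_pos hc, List.filter_cons_of_neg (by simp [hc])]
      exact cons_mem_shuffles_left c ih
    · rw [List.filter_cons_of_neg (by simpa using hc),
        List.filter_cons_of_pos (by simpa using hc)]
      exact cons_mem_shuffles_right c ih

theorem shuffles_nodup {V : Type} : ∀ (u v : List V), (u ++ v).Nodup →
    (shuffles u v).Nodup := by
  intro u v
  induction u, v using shuffles.induct with
  | case1 v => simp [shuffles]
  | case2 a u => simp [shuffles]
  | case3 a u b v ih1 ih2 =>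
    intro hn
    obtain ⟨⟨-, hab, -⟩, -⟩ : (a ∉ u ∧ a ≠ b ∧ a ∉ v) ∧ (u ++ b :: v).Nodup := by
      simpa using hn
    rw [shuffles]
    refine List.Nodup.append ?_ ?_ ?_
    · exact (ih1 (by simpa using (List.nodup_cons.1 hn).2)).map
        (fun x y h => by injection h)
    · refine (ih2 ?_).map (fun x y h => by injection h)
      exact ((List.perm_middle (a := b) (l₁ := a :: u) (l₂ := v)).nodup hn).of_cons
    · intro w h1 h2
      rcases List.mem_map.1 h1 with ⟨w1, _, rfl⟩
      rcases List.mem_map.1 h2 with ⟨w2, _, he⟩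
      injection he with he1 _
      exact hab he1.symm

theorem psi_nil {V : Type} : psi ([] : List V) = 1 := by simp [psi]

theorem psi_single {V : Type} (a : V) : psi [a] = 1 := by simp [psi]

theorem psi_cons_cons {V : Type} (a b : V) (t : List V) :
    psi (a :: b :: t) = (xv a - xv b)⁻¹ * psi (b :: t) := by
  simp [psi, mul_inv, mul_comm]

theorem xv_sub_ne_zero {V : Type} {a b : V} (h : a ≠ b) : xv a - xv b ≠ 0 := by
  have hX : (MvPolynomial.X a : MvPolynomial V ℚ) ≠ MvPolynomial.X b := by
    intro hc
    have := congrArg (MvPolynomial.coeff (Finsupp.single a 1)) hc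
    classical
    rw [MvPolynomial.coeff_X', MvPolynomial.coeff_X'] at this
    simp [Finsupp.single_eq_single_iff, h, Ne.symm h] at this
  have hinj : Function.Injective (algebraMap (MvPolynomial V ℚ) (K V)) :=
    IsFractionRing.injective _ _
  simp only [xv, ← map_sub]
  intro hc
  exact (sub_ne_zero.2 hX) (by simpa using hinj (by simpa using hc))

theorem sum_psi_shuffles_cons {V : Type} :
    ∀ (u v : List V) (h : V), (h :: (u ++ v)).Nodup →
      (((shuffles u v).map (fun w => psi (h :: w))).sum) = psi (h :: u) * psi (h :: v) := by
  intro u v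
  induction u, v using shuffles.induct with
  | case1 v => intro h _; simp [shuffles, psi_single]
  | case2 a u => intro h _; simp [shuffles, psi_single]
  | case3 a u b v ih1 ih2 =>
    intro h hn
    have hn' : (h :: ((a :: u) ++ (b :: v))).Nodup := hn
    have hha : h ≠ a := by
      have := (List.nodup_cons.1 hn').1; intro he; exact this (by simp [he])
    have hhb : h ≠ b := by
      have := (List.nodup_cons.1 hn').1; intro he; exact this (by simp [he])
    obtain ⟨⟨-, hab, -⟩, -⟩ : (a ∉ u ∧ a ≠ b ∧ a ∉ v) ∧ (u ++ b :: v).Nodup := by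
      simpa using (List.nodup_cons.1 hn').2
    have key1 : (a :: (u ++ (b :: v))).Nodup := (List.nodup_cons.1 hn').2
    have key2 : (b :: ((a :: u) ++ v)).Nodup :=
      (List.perm_middle (a := b) (l₁ := a :: u) (l₂ := v)).nodup (List.nodup_cons.1 hn').2
    have e1 := ih1 a key1
    have e2 := ih2 b key2
    rw [shuffles, List.map_append, List.sum_append, List.map_map, List.map_map]
    have r1 : ((shuffles u (b :: v)).map ((fun w => psi (h :: w)) ∘ (a :: ·))).sum
        = (xv h - xv a)⁻¹ * (psi (a :: u) * psi (a :: b :: v)) := by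
      rw [show ((fun w => psi (h :: w)) ∘ (fun x : List V => a :: x))
          = (fun w => (xv h - xv a)⁻¹ * psi (a :: w)) from funext fun w => psi_cons_cons h a w,
        List.sum_map_mul_left, e1]
    have r2 : ((shuffles (a :: u) v).map ((fun w => psi (h :: w)) ∘ (b :: ·))).sum
        = (xv h - xv b)⁻¹ * (psi (b :: a :: u) * psi (b :: v)) := by
      rw [show ((fun w => psi (h :: w)) ∘ (fun x : List V => b :: x))
          = (fun w => (xv h - xv b)⁻¹ * psi (b :: w)) from funext fun w => psi_cons_cons h b w,
        List.sum_map_mul_left, e2]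
    rw [r1, r2, psi_cons_cons b a u, psi_cons_cons a b v,
      psi_cons_cons h a u, psi_cons_cons h b v]
    have na := xv_sub_ne_zero hha
    have nb := xv_sub_ne_zero hhb
    have nab := xv_sub_ne_zero hab
    have nba := xv_sub_ne_zero hab.symm
    have scalar : (xv h - xv a)⁻¹ * (xv a - xv b)⁻¹ + (xv h - xv b)⁻¹ * (xv b - xv a)⁻¹
        = (xv h - xv a)⁻¹ * (xv h - xv b)⁻¹ := by
      field_simp
      ring
    linear_combination (psi (a :: u) * psi (b :: v)) * scalar

theorem sum_psi_shuffles {V : Type} (a b : V) (u v : List V)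
    (hn : ((a :: u) ++ (b :: v)).Nodup) :
    (((shuffles (a :: u) (b :: v)).map psi).sum) = 0 := by
  have key1 : (a :: (u ++ (b :: v))).Nodup := hn
  have key2 : (b :: ((a :: u) ++ v)).Nodup :=
    (List.perm_middle (a := b) (l₁ := a :: u) (l₂ := v)).nodup hn
  rw [shuffles, List.map_append, List.sum_append, List.map_map, List.map_map]
  have r1 : (psi ∘ (fun x : List V => a :: x)) = (fun w => psi (a :: w)) := rfl
  have r2 : (psi ∘ (fun x : List V => b :: x)) = (fun w => psi (b :: w)) := rfl
  rw [r1, r2, sum_psi_shuffles_cons u (b :: v) a key1,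
    sum_psi_shuffles_cons (a :: u) v b key2,
    psi_cons_cons a b v, psi_cons_cons b a u]
  have : (xv b - xv a)⁻¹ = -(xv a - xv b)⁻¹ := by
    rw [← inv_neg]; ring_nf
  rw [this]; ring

theorem indexOf_lt_of_sublist {V : Type} [DecidableEq V] :
    ∀ {u w : List V}, List.Sublist u w → w.Nodup → ∀ {a b : V}, a ∈ u → b ∈ u →
      u.idxOf a < u.idxOf b → w.idxOf a < w.idxOf b := by
  intro u w hs
  induction hs with
  | slnil => intro _ a b ha; simp at ha
  | @cons u w c hsub ih =>
    intro hw a b ha hb hab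
    have hcw : c ∉ w := (List.nodup_cons.1 hw).1
    have hac : c ≠ a := fun h => hcw (h ▸ hsub.subset ha)
    have hbc : c ≠ b := fun h => hcw (h ▸ hsub.subset hb)
    rw [List.idxOf_cons_ne _ hac, List.idxOf_cons_ne _ hbc, Nat.succ_lt_succ_iff]
    exact ih (List.nodup_cons.1 hw).2 ha hb hab
  | @cons_cons u w c hsub ih =>
    intro hw a b ha hb hab
    have hcw : c ∉ w := (List.nodup_cons.1 hw).1
    have hbc : b ≠ c := by
      intro h; subst h
      rw [List.idxOf_cons_self] at hab; omega
    have hbu : b ∈ u := by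
      rcases List.mem_cons.1 hb with h | h
      · exact absurd h hbc
      · exact h
    rw [List.idxOf_cons_ne _ (Ne.symm hbc)]
    by_cases hac : a = c
    · subst hac
      rw [List.idxOf_cons_self]
      omega
    · have hau : a ∈ u := by
        rcases List.mem_cons.1 ha with h | h
        · exact absurd h hac
        · exact h
      rw [List.idxOf_cons_ne _ (fun h => hac h.symm)]
      rw [List.idxOf_cons_ne _ (fun h => hac h.symm),
        List.idxOf_cons_ne _ (Ne.symm hbc)] at hab
      have := ih (List.nodup_cons.1 hw).2 hau hbu (by omega)
      omega

theorem indexOf_lt_iff_of_sublist {V : Type} [DecidableEq V] {u w : List V}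
    (hs : List.Sublist u w) (hw : w.Nodup) {a b : V} (ha : a ∈ u) (hb : b ∈ u)
    (hab : a ≠ b) :
    (u.idxOf a < u.idxOf b ↔ w.idxOf a < w.idxOf b) := by
  constructor
  · exact indexOf_lt_of_sublist hs hw ha hb
  · intro h
    by_contra hc
    have hne : u.idxOf a ≠ u.idxOf b := fun he => hab ((List.idxOf_inj ha).1 he)
    have : u.idxOf b < u.idxOf a := by omega
    have := indexOf_lt_of_sublist hs hw hb ha this
    omega

theorem wordOf_length {V : Type} (W : Finset V) (σ : Fin W.card ≃ W) :
    (wordOf W σ).length = W.card := by simp [wordOf]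

theorem wordOf_get {V : Type} (W : Finset V) (σ : Fin W.card ≃ W) (i : Fin W.card) :
    (wordOf W σ).get (Fin.cast (wordOf_length W σ).symm i) = ((σ i : W) : V) := by
  simp [wordOf]; rfl

theorem wordOf_nodup {V : Type} (W : Finset V) (σ : Fin W.card ≃ W) :
    (wordOf W σ).Nodup := by
  refine List.Nodup.map ?_ (List.nodup_finRange _)
  intro i j h
  exact σ.injective (Subtype.ext h)

theorem wordOf_mem {V : Type} [Fintype V] (σ : Fin (Finset.univ : Finset V).card ≃ (Finset.univ : Finset V))
    (x : V) : x ∈ wordOf Finset.univ σ := by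
  rcases σ.surjective ⟨x, Finset.mem_univ x⟩ with ⟨i, hi⟩
  exact List.mem_map.2 ⟨i, List.mem_finRange i, by rw [hi]⟩

theorem wordOf_getElem? {V : Type} (W : Finset V) (σ : Fin W.card ≃ W) (i : Fin W.card) :
    (wordOf W σ)[(i : ℕ)]? = some ((σ i : W) : V) := by
  simp [wordOf]

theorem wordOf_injective {V : Type} (W : Finset V) :
    Function.Injective (wordOf W) := by
  intro σ τ h
  ext i
  have h1 := wordOf_getElem? W σ i
  rw [h, wordOf_getElem? W τ i] at h1
  exact congrArg Subtype.val (Subtype.ext (Option.some.inj h1)).symm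

theorem exists_pair_iff_indexOf {V : Type} [DecidableEq V] {w : List V} (hw : w.Nodup)
    {a b : V} (ha : a ∈ w) (hb : b ∈ w) :
    (∃ i j : Fin w.length, i < j ∧ w.get i = a ∧ w.get j = b) ↔
      w.idxOf a < w.idxOf b := by
  constructor
  · rintro ⟨i, j, hij, rfl, rfl⟩
    rw [List.get_idxOf hw, List.get_idxOf hw]
    exact hij
  · intro h
    refine ⟨⟨w.idxOf a, List.idxOf_lt_length_iff.2 ha⟩, ⟨w.idxOf b, List.idxOf_lt_length_iff.2 hb⟩,
      h, List.idxOf_get _, List.idxOf_get _⟩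

theorem isExt_iff_indexOf {V : Type} [DecidableEq V] [Fintype V] (E : Finset (V × V))
    (σ : Fin (Finset.univ : Finset V).card ≃ (Finset.univ : Finset V)) :
    IsExt Finset.univ E σ ↔
      ∀ e ∈ E, (wordOf Finset.univ σ).idxOf e.1 < (wordOf Finset.univ σ).idxOf e.2 := by
  constructor
  · intro h e he
    rcases h e he with ⟨i, j, hij, h1, h2⟩
    refine (exists_pair_iff_indexOf (wordOf_nodup _ _) (wordOf_mem σ e.1) (wordOf_mem σ e.2)).1
      ⟨Fin.cast (wordOf_length _ _).symm i, Fin.cast (wordOf_length _ _).symm j, hij,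
        by rw [wordOf_get]; exact h1, by rw [wordOf_get]; exact h2⟩
  · intro h e he
    rcases (exists_pair_iff_indexOf (wordOf_nodup _ _) (wordOf_mem σ e.1) (wordOf_mem σ e.2)).2
      (h e he) with ⟨i, j, hij, h1, h2⟩
    refine ⟨Fin.cast (wordOf_length _ _) i, Fin.cast (wordOf_length _ _) j, hij, ?_, ?_⟩
    · rw [← h1, ← wordOf_get]; rfl
    · rw [← h2, ← wordOf_get]; rfl

theorem exists_wordOf {V : Type} [Fintype V] [DecidableEq V] {w : List V}
    (hn : w.Nodup) (hc : ∀ x : V, x ∈ w) :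
    ∃ σ : Fin (Finset.univ : Finset V).card ≃ (Finset.univ : Finset V),
      wordOf Finset.univ σ = w := by
  have htf : w.toFinset = (Finset.univ : Finset V) := by
    ext x; simp [hc x]
  have hlen : w.length = (Finset.univ : Finset V).card := by
    rw [← htf, List.toFinset_card_of_nodup hn]
  have hget : Function.Injective w.get := List.nodup_iff_injective_get.1 hn
  set f : Fin (Finset.univ : Finset V).card → (Finset.univ : Finset V) :=
    fun i => ⟨w.get (Fin.cast hlen.symm i), Finset.mem_univ _⟩ with hf
  have hfinj : Function.Injective f := by
    intro i j h
    have := hget (Subtype.ext_iff.1 h)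
    exact Fin.ext (by have h2 := Fin.ext_iff.1 this; exact h2)
  have hcard : Fintype.card (Fin (Finset.univ : Finset V).card)
      = Fintype.card (Finset.univ : Finset V) := by
    rw [Fintype.card_fin, Fintype.card_coe]
  have hbij : Function.Bijective f :=
    (Fintype.bijective_iff_injective_and_card f).2 ⟨hfinj, hcard⟩
  refine ⟨Equiv.ofBijective f hbij, ?_⟩
  apply List.ext_getElem
  · simp [wordOf, hlen]
  · intro i h1 h2
    simp [wordOf, Equiv.ofBijective, hf]; rfl

/-- if the underlying undirected graph of `E` is disconnected, then
`Ψ(G) = 0`, equivalently `N(G) = 0`. -/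
theorem NG_of_disconnected (V : Type) [Fintype V] [DecidableEq V] (E : Finset (V × V))
    (hdisc : ¬ (undirected E).Preconnected) :
    PsiG (Finset.univ : Finset V) E = 0 ∧ NG (Finset.univ : Finset V) E = 0 := by
  classical
  suffices hP : PsiG (Finset.univ : Finset V) E = 0 by
    exact ⟨hP, by rw [NG, hP, zero_mul]⟩
  by_cases hloop : ∀ e ∈ E, e.1 ≠ e.2
  case neg =>
    push_neg at hloop
    obtain ⟨e, he, heq⟩ := hloop
    rw [PsiG]
    refine Finset.sum_eq_zero fun σ _ => if_neg fun hext => ?_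
    obtain ⟨i, j, hij, h1, h2⟩ := hext e he
    have : σ i = σ j := Subtype.ext (by rw [h1, h2, heq])
    exact absurd (σ.injective this) (Fin.ne_of_lt hij)
  case pos =>
  unfold SimpleGraph.Preconnected at hdisc
  push_neg at hdisc
  obtain ⟨r, s, hrs⟩ := hdisc
  set p : V → Bool := fun x => decide ((undirected E).Reachable r x) with hp
  have hpr : p r = true := by
    simp only [hp, decide_eq_true_eq]
    exact SimpleGraph.Reachable.refl r
  have hps : p s = false := by simp [hp, hrs]
  have hedge : ∀ e ∈ E, p e.1 = p e.2 := by
    intro e he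
    by_cases hne : e.1 = e.2
    · rw [hne]
    · have hadj : (undirected E).Adj e.1 e.2 := by
        rw [undirected, SimpleGraph.fromRel_adj]
        exact ⟨hne, Or.inl he⟩
      simp only [hp, decide_eq_decide]
      exact ⟨fun h => h.trans hadj.reachable, fun h => h.trans hadj.symm.reachable⟩
  set C : List V → Prop := fun w => ∀ e ∈ E, w.idxOf e.1 < w.idxOf e.2 with hC
  set g : List V → K V := fun w => if C w then psi w else 0 with hg
  set P : Finset (List V) :=
    Finset.univ.image (wordOf (Finset.univ : Finset V)) with hPdef
  have hPprop : ∀ w ∈ P, w.Nodup ∧ ∀ x : V, x ∈ w := by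
    intro w hw
    obtain ⟨σ, -, rfl⟩ := Finset.mem_image.1 hw
    exact ⟨wordOf_nodup _ _, wordOf_mem σ⟩
  have hsum1 : PsiG (Finset.univ : Finset V) E = ∑ w ∈ P, g w := by
    rw [hPdef, Finset.sum_image (fun x _ y _ h => wordOf_injective _ h), PsiG]
    refine Finset.sum_congr rfl fun σ _ => ?_
    exact if_congr (isExt_iff_indexOf E σ) rfl rfl
  rw [hsum1]
  set key : List V → List V × List V :=
    fun w => (w.filter p, w.filter (fun x => !p x)) with hkey
  rw [← Finset.sum_fiberwise_of_maps_to
    (t := P.image key) (fun w hw => Finset.mem_image_of_mem key hw) g]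
  refine Finset.sum_eq_zero fun y hy => ?_
  obtain ⟨w₀, hw₀P, hkw₀⟩ := Finset.mem_image.1 hy
  obtain ⟨hn₀, hc₀⟩ := hPprop w₀ hw₀P
  set u₀ : List V := w₀.filter p with hu₀
  set v₀ : List V := w₀.filter (fun x => !p x) with hv₀
  obtain rfl : (u₀, v₀) = y := hkw₀
  have hperm₀ : w₀.Perm (u₀ ++ v₀) := shuffles_perm _ _ _ (mem_shuffles_filter p w₀)
  have hnuv : (u₀ ++ v₀).Nodup := hperm₀.nodup hn₀
  have hfiber : Finset.filter (fun w => key w = (u₀, v₀)) P = (shuffles u₀ v₀).toFinset := by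
    ext w
    simp only [Finset.mem_filter, List.mem_toFinset]
    constructor
    · rintro ⟨hwP, hkw⟩
      have h1 : w.filter p = u₀ := congrArg Prod.fst hkw
      have h2 : w.filter (fun x => !p x) = v₀ := congrArg Prod.snd hkw
      have := mem_shuffles_filter p w
      rwa [h1, h2] at this
    · intro hw
      have hperm : w.Perm w₀ := ((shuffles_perm _ _ _ hw).trans hperm₀.symm)
      have hn : w.Nodup := hperm.symm.nodup hn₀
      have hc : ∀ x : V, x ∈ w := fun x => hperm.mem_iff.2 (hc₀ x)
      obtain ⟨σ, hσ⟩ := exists_wordOf hn hc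
      refine ⟨Finset.mem_image.2 ⟨σ, Finset.mem_univ _, hσ⟩, ?_⟩
      have hfil := filter_of_mem_shuffles p u₀ v₀ w hw
        (fun x hx => (List.mem_filter.1 (hu₀ ▸ hx)).2)
        (fun x hx => by
          have := (List.mem_filter.1 (hv₀ ▸ hx)).2
          simpa using this)
      rw [hkey]
      exact Prod.ext hfil.1 hfil.2
  rw [hfiber]
  have hru : r ∈ u₀ := List.mem_filter.2 ⟨hc₀ r, hpr⟩
  have hsv : s ∈ v₀ := List.mem_filter.2 ⟨hc₀ s, by simp [hps]⟩
  -- the condition `C` is equivalent, on the fiber, to a condition `Q` depending only on u₀, v₀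
  set Q : Prop := ∀ e ∈ E, if p e.1 = true then u₀.idxOf e.1 < u₀.idxOf e.2
      else v₀.idxOf e.1 < v₀.idxOf e.2 with hQdef
  have condIff : ∀ w, w.Nodup → (∀ x : V, x ∈ w) → w.filter p = u₀ →
      w.filter (fun x => !p x) = v₀ → (C w ↔ Q) := by
    intro w hn hc hf1 hf2
    rw [hC, hQdef]
    refine forall₂_congr fun e he => ?_
    have hne : e.1 ≠ e.2 := hloop e he
    have hpe : p e.1 = p e.2 := hedge e he
    by_cases h1 : p e.1 = true
    · rw [if_pos h1]
      have m1 : e.1 ∈ w.filter p := List.mem_filter.2 ⟨hc e.1, h1⟩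
      have m2 : e.2 ∈ w.filter p := List.mem_filter.2 ⟨hc e.2, hpe ▸ h1⟩
      have := indexOf_lt_iff_of_sublist (List.filter_sublist (l := w)) hn m1 m2 hne
      rw [hf1] at this
      exact this.symm
    · rw [if_neg h1]
      have h1' : (!p e.1) = true := by simp at h1 ⊢; exact h1
      have h2' : (!p e.2) = true := by rw [← hpe]; exact h1'
      have m1 : e.1 ∈ w.filter (fun x => !p x) := List.mem_filter.2 ⟨hc e.1, h1'⟩
      have m2 : e.2 ∈ w.filter (fun x => !p x) := List.mem_filter.2 ⟨hc e.2, h2'⟩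
      have := indexOf_lt_iff_of_sublist (List.filter_sublist (l := w)) hn m1 m2 hne
      rw [hf2] at this
      exact this.symm
  have hwfacts : ∀ w ∈ (shuffles u₀ v₀).toFinset,
      w.Nodup ∧ (∀ x : V, x ∈ w) ∧ w.filter p = u₀ ∧ w.filter (fun x => !p x) = v₀ := by
    intro w hw
    rw [← hfiber] at hw
    obtain ⟨hwP, hkw⟩ := Finset.mem_filter.1 hw
    obtain ⟨hn, hc⟩ := hPprop w hwP
    exact ⟨hn, hc, congrArg Prod.fst hkw, congrArg Prod.snd hkw⟩
  by_cases hQ : Q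
  · have hgw : ∀ w ∈ (shuffles u₀ v₀).toFinset, g w = psi w := by
      intro w hw
      obtain ⟨hn, hc, hf1, hf2⟩ := hwfacts w hw
      rw [hg]
      exact if_pos ((condIff w hn hc hf1 hf2).2 hQ)
    rw [Finset.sum_congr rfl hgw, List.sum_toFinset _ (shuffles_nodup u₀ v₀ hnuv)]
    obtain ⟨a, u', hu'⟩ := List.exists_cons_of_ne_nil (List.ne_nil_of_mem hru)
    obtain ⟨b, v', hv'⟩ := List.exists_cons_of_ne_nil (List.ne_nil_of_mem hsv)
    rw [hu', hv']
    exact sum_psi_shuffles a b u' v' (by rw [← hu', ← hv']; exact hnuv)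
  · refine Finset.sum_eq_zero fun w hw => ?_
    obtain ⟨hn, hc, hf1, hf2⟩ := hwfacts w hw
    rw [hg]
    exact if_neg (fun hCw => hQ ((condIff w hn hc hf1 hf2).1 hCw))
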